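/- Let (V; ρ, μ, ν) be a representation of a post-Lie algebra (g, [·,·], ▷). Define on g ⊕ V the bracket [x₁+v₁, x₂+v₂]_ρ := [x₁,x₂] + ρ(x₁)v₂ − ρ(x₂)v₁ and the product (x₁+v₁) ▷' (x₂+v₂) := x₁▷x₂ + μ(x₁)v₂ + ν(x₂)v₁. Then (g ⊕ V, [·,·]_ρ, ▷') is a post-Lie algebra. -/
import Mathlib


/-- The semidirect product of a post-Lie algebra with a representation is a post-Lie algebra. -/
theorem postLie_semidirectProduct {K : Type*} [Field K] [CharZero K]
    {g : Type*} [LieRing g] [LieAlgebra K g]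
    {V : Type*} [AddCommGroup V] [Module K V]
    (t : g →ₗ[K] g →ₗ[K] g)
    (hpost1 : ∀ x y z : g, t x ⁅y, z⁆ = ⁅t x y, z⁆ + ⁅y, t x z⁆)
    (hpost2 : ∀ x y z : g,
      t ⁅x, y⁆ z = t x (t y z) - t (t x y) z - t y (t x z) + t (t y x) z)
    (ρ μ ν : g →ₗ[K] V →ₗ[K] V)
    (hρ : ∀ (x y : g) (v : V), ρ ⁅x, y⁆ v = ρ x (ρ y v) - ρ y (ρ x v))
    (h1 : ∀ (x y : g) (v : V), ρ (t x y) v = μ x (ρ y v) - ρ y (μ x v))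
    (h2 : ∀ (x y : g) (v : V), ν ⁅x, y⁆ v = ρ x (ν y v) - ρ y (ν x v))
    (h3 : ∀ (x y : g) (v : V),
      μ ⁅x, y⁆ v = μ x (μ y v) - μ (t x y) v - μ y (μ x v) + μ (t y x) v)
    (h4 : ∀ (x y : g) (v : V),
      ν y (ρ x v) = μ x (ν y v) - ν y (μ x v) - ν (t x y) v + ν y (ν x v))
    (B P : g × V → g × V → g × V)
    (hB : ∀ p q, B p q = (⁅p.1, q.1⁆, ρ p.1 q.2 - ρ q.1 p.2))
    (hP : ∀ p q, P p q = (t p.1 q.1, μ p.1 q.2 + ν q.1 p.2)) :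
    (∀ p q, B p q = -B q p) ∧
    (∀ p q r, B p (B q r) = B (B p q) r + B q (B p r)) ∧
    (∀ p q r, P p (B q r) = B (P p q) r + B q (P p r)) ∧
    (∀ p q r, P (B p q) r =
      P p (P q r) - P (P p q) r - P q (P p r) + P (P q p) r) := by
  have key : ∀ (a b : g × V), a.1 = b.1 → a.2 = b.2 → a = b := by
    intro a b h1 h2; exact Prod.ext h1 h2
  refine ⟨?_, ?_, ?_, ?_⟩
  · intro p q
    simp only [hB, Prod.neg_mk, ← lie_skew p.1 q.1]
    refine key _ _ rfl ?_; simp only; abel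
  · intro p q r
    simp only [hB, map_sub, map_add, LinearMap.sub_apply, LinearMap.add_apply, hρ,
      Prod.mk_add_mk]
    refine key _ _ (leibniz_lie p.1 q.1 r.1) ?_; simp only; abel
  · intro p q r
    simp only [hB, hP, map_sub, map_add, LinearMap.sub_apply, LinearMap.add_apply, hpost1,
      h1, h2, Prod.mk_add_mk]
    refine key _ _ rfl ?_; simp only; abel
  · intro p q r
    simp only [hB, hP, map_sub, map_add, LinearMap.sub_apply, LinearMap.add_apply, hpost2,
      h3, h4, Prod.mk_add_mk, Prod.mk_sub_mk]
    refine key _ _ rfl ?_; simp only; abel
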